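/- Let Σ⁺ and Σ⁻ be two finite sets of equal cardinality i+1 (i ≥ 0), arranged alternately in a single cyclic order (so that the cyclic successor map τ sends Σ⁻ to Σ⁺ and Σ⁺ to Σ⁻). Let ω : Σ⁻ → E⁻ and α : Σ⁺ → E⁺ be maps with the following property: for every c in the image of ω and every σ⁺ ∈ Σ⁺ that is adjacent to J = ω⁻¹(c) (meaning exactly one of τ(σ⁺), τ⁻¹(σ⁺) lies in J), there exists σ'⁺ ∈ Σ⁺, distinct from σ⁺, also adjacent to J, with α(σ'⁺) = α(σ⁺). Then #Im(α) + #Im(ω) ≤ i + 2. -/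
import Mathlib


/-- Combinatorial lemma on alternating cyclic families (Lemma `combi`).
`Σ⁻` and `Σ⁺` both have cardinality `i+1` and are modelled by `ZMod (i+1)` placed
alternately on a cycle: the stable cone `σ⁺_k` has cyclic predecessor `σ⁻_k` and
cyclic successor `σ⁻_{k+1}`.  A cone `σ⁺_k` is *adjacent* to `J = ω⁻¹(c)` when
exactly one of its two neighbours lies in `J`. -/
theorem stmt0 (i : ℕ) {Eneg Epos : Type*}
    (ω : ZMod (i + 1) → Eneg) (α : ZMod (i + 1) → Epos)
    (h : ∀ c : Eneg, c ∈ Set.range ω →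
      ∀ k : ZMod (i + 1), Xor' (ω k = c) (ω (k + 1) = c) →
        ∃ k' : ZMod (i + 1), k' ≠ k ∧ Xor' (ω k' = c) (ω (k' + 1) = c) ∧ α k' = α k) :
    (Set.range α).ncard + (Set.range ω).ncard ≤ i + 2 := by
  classical
  have hcastval : ∀ k : ZMod (i + 1), ((k.val : ℕ) : ZMod (i + 1)) = k := by
    intro k; simp [ZMod.natCast_val, ZMod.cast_id]
  -- least natural occurrence of a value of ω, as an opaque function
  obtain ⟨s, hs_spec, hs_min⟩ :
      ∃ s : Eneg → ℕ,
        (∀ c, (∃ j : ℕ, ω (j : ZMod (i + 1)) = c) → ω ((s c : ℕ) : ZMod (i + 1)) = c) ∧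
        (∀ c, ∀ j : ℕ, ω ((j : ℕ) : ZMod (i + 1)) = c → s c ≤ j) := by
    refine ⟨fun c => if hc : ∃ j : ℕ, ω (j : ZMod (i + 1)) = c then Nat.find hc else 0, ?_, ?_⟩
    · intro c hc; simp only [dif_pos hc]; exact Nat.find_spec hc
    · intro c j hj
      have hc : ∃ j : ℕ, ω (j : ZMod (i + 1)) = c := ⟨j, hj⟩
      simp only [dif_pos hc]
      exact Nat.find_le hj
  set T : Finset Eneg := Finset.univ.image ω with hT
  set S : Finset (ZMod (i + 1)) :=
    (T.erase (ω 0)).image (fun c => ((s c - 1 : ℕ) : ZMod (i + 1))) with hS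
  -- facts for c in T.erase (ω 0)
  have hfacts : ∀ c ∈ T.erase (ω 0),
      (∃ j : ℕ, ω (j : ZMod (i + 1)) = c) ∧ s c ≠ 0 ∧ s c < i + 1 := by
    intro c hc
    obtain ⟨k, _, hk⟩ := Finset.mem_image.mp (Finset.mem_of_mem_erase hc)
    have hex : ∃ j : ℕ, ω (j : ZMod (i + 1)) = c := ⟨k.val, by rw [hcastval]; exact hk⟩
    refine ⟨hex, ?_, ?_⟩
    · intro h0
      have := hs_spec c hex
      rw [h0] at this
      simp only [Nat.cast_zero] at this
      exact (Finset.ne_of_mem_erase hc) this.symm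
    · have h1 : s c ≤ k.val := hs_min c k.val (by rw [hcastval]; exact hk)
      exact lt_of_le_of_lt h1 k.val_lt
  have hScard : S.card = T.card - 1 := by
    have hinj : Set.InjOn (fun c => ((s c - 1 : ℕ) : ZMod (i + 1))) (T.erase (ω 0)) := by
      intro c1 h1 c2 h2 heq
      obtain ⟨he1, hne1, hlt1⟩ := hfacts c1 h1
      obtain ⟨he2, hne2, hlt2⟩ := hfacts c2 h2
      simp only at heq
      have hv1 : s c1 - 1 < i + 1 := by omega
      have hv2 : s c2 - 1 < i + 1 := by omega
      have heq' : s c1 - 1 = s c2 - 1 := by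
        have := congrArg ZMod.val heq
        rwa [ZMod.val_natCast_of_lt hv1, ZMod.val_natCast_of_lt hv2] at this
      have hseq : s c1 = s c2 := by omega
      have := hs_spec c1 he1
      rw [hseq, hs_spec c2 he2] at this
      exact this.symm
    rw [hS, Finset.card_image_of_injOn hinj, Finset.card_erase_of_mem]
    exact Finset.mem_image.mpr ⟨0, Finset.mem_univ _, rfl⟩
  -- key claim: every value of α is attained outside S
  have key : ∀ p ∈ Finset.univ.image α, ∃ k : ZMod (i + 1), k ∉ S ∧ α k = p := by
    intro p hp
    by_contra hcon
    push_neg at hcon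
    have hFne : (Finset.univ.filter (fun k => α k = p)).Nonempty := by
      obtain ⟨k, _, hk⟩ := Finset.mem_image.mp hp
      exact ⟨k, Finset.mem_filter.mpr ⟨Finset.mem_univ _, hk⟩⟩
    obtain ⟨k, hkF, hkmax⟩ :=
      (Finset.univ.filter (fun k => α k = p)).exists_max_image (fun k => k.val) hFne
    have hαk : α k = p := (Finset.mem_filter.mp hkF).2
    have hkS : k ∈ S := by
      by_contra hns
      exact hcon k hns hαk
    obtain ⟨c, hcE, hck⟩ := Finset.mem_image.mp hkS
    obtain ⟨hex, hsne, hslt⟩ := hfacts c hcE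
    have hkval : k.val = s c - 1 := by
      rw [← hck, ZMod.val_natCast_of_lt (by omega : s c - 1 < i + 1)]
    -- adjacency at k
    have hwk : ω k ≠ c := by
      rw [← hck]
      intro hcontra
      have := hs_min c (s c - 1) hcontra
      omega
    have hwk1 : ω (k + 1) = c := by
      have heq : ((s c : ℕ) : ZMod (i + 1)) = k + 1 := by
        rw [← hck]
        have h1 : (s c : ℕ) = (s c - 1) + 1 := by omega
        rw [h1]; push_cast; ring
      rw [← heq]; exact hs_spec c hex
    obtain ⟨k', hk'ne, hxor, hαk'⟩ := h c ⟨_, hs_spec c hex⟩ k (Or.inr ⟨hwk1, hwk⟩)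
    have hk'F : k' ∈ Finset.univ.filter (fun k => α k = p) :=
      Finset.mem_filter.mpr ⟨Finset.mem_univ _, by rw [hαk', hαk]⟩
    have hk'le : k'.val ≤ k.val := hkmax k' hk'F
    rcases hxor with ⟨hw1, _⟩ | ⟨hw2, _⟩
    · -- ω k' = c : then s c ≤ k'.val, contradiction with k'.val ≤ s c - 1 < s c
      have hle : s c ≤ k'.val := hs_min c k'.val (by rw [hcastval]; exact hw1)
      omega
    · -- ω (k'+1) = c
      have hge : s c ≤ (k' + 1).val :=
        hs_min c (k' + 1).val (by rw [hcastval]; exact hw2)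
      have hub : (k' + 1).val ≤ k'.val + 1 := by
        have h2 := ZMod.val_add_le k' 1
        have h1 : (1 : ZMod (i + 1)).val = 1 % (i + 1) := ZMod.val_one_eq_one_mod _
        have h3 : 1 % (i + 1) ≤ 1 := Nat.mod_le 1 (i + 1)
        omega
      have hveq : k'.val = k.val := by omega
      exact hk'ne (ZMod.val_injective _ hveq)
  -- counting
  have hsub : Finset.univ.image α ⊆ (Finset.univ \ S).image α := by
    intro p hp
    obtain ⟨k, hk, hak⟩ := key p hp
    exact Finset.mem_image.mpr ⟨k, by simp [hk], hak⟩
  have hcardU : (Finset.univ : Finset (ZMod (i + 1))).card = i + 1 := by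
    rw [Finset.card_univ, ZMod.card]
  have hL : (Finset.univ.image α).card ≤ (i + 1) - (T.card - 1) := by
    calc (Finset.univ.image α).card ≤ ((Finset.univ \ S).image α).card :=
          Finset.card_le_card hsub
      _ ≤ (Finset.univ \ S).card := Finset.card_image_le
      _ = (i + 1) - S.card := by rw [Finset.card_sdiff_of_subset (Finset.subset_univ S), hcardU]
      _ = (i + 1) - (T.card - 1) := by rw [hScard]
  have hTpos : 1 ≤ T.card :=
    Finset.card_pos.mpr ⟨ω 0, Finset.mem_image.mpr ⟨0, Finset.mem_univ _, rfl⟩⟩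
  have hTle : T.card ≤ i + 1 := by
    calc T.card ≤ (Finset.univ : Finset (ZMod (i + 1))).card := Finset.card_image_le
      _ = i + 1 := hcardU
  have hrα : (Set.range α).ncard = (Finset.univ.image α).card := by
    rw [show Set.range α = ↑(Finset.univ.image α) by simp, Set.ncard_coe_finset]
  have hrω : (Set.range ω).ncard = T.card := by
    rw [show Set.range ω = ↑T by simp [hT], Set.ncard_coe_finset]
  rw [hrα, hrω]
  omega
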